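/- Let q be any prime power and F = GF(q). Let u, v0 ∈ F with v0 ≠ 0 be such that v0·λ^2 + u·v0·λ − 1 ≠ 0 for all λ ∈ F. Let W be the 4-dimensional subspace of quadratic forms over F spanned by v0^{-1}·X0^2 + u·X0X1 − X1^2, X0X2, X1X2 and X2^2 (the web of conics associated with the line-orbit o_{10}). Then among the conics of W there is exactly 1 double line, exactly q^2+q pairs of real lines, exactly q^2 pairs of imaginary lines, and exactly q^3−q^2 nonsingular conics. -/

import Mathlib

open Matrix

namespace Conics

/-- Coefficient vector (a0,...,a5) of the product of two linear forms
`(b0*X0+b1*X1+b2*X2)*(c0*X0+c1*X1+c2*X2)`, where the quadratic form with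
coefficient vector `a` is `a0*X0^2 + a1*X0*X1 + a2*X0*X2 + a3*X1^2 + a4*X1*X2 + a5*X2^2`. -/
def mulLin {F : Type} [Field F] (b c : Fin 3 → F) : Fin 6 → F :=
  ![b 0 * c 0, b 0 * c 1 + b 1 * c 0, b 0 * c 2 + b 2 * c 0,
    b 1 * c 1, b 1 * c 2 + b 2 * c 1, b 2 * c 2]

/-- The discriminant of the quadratic form with coefficient vector `a`. -/
def disc {F : Type} [Field F] (a : Fin 6 → F) : F :=
  4 * a 0 * a 3 * a 5 + a 1 * a 2 * a 4 - a 0 * a 4 ^ 2 - a 3 * a 2 ^ 2 - a 5 * a 1 ^ 2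

/-- `f_a` is a double line: `f_a = c * l^2` for a nonzero scalar `c` and nonzero linear form `l`. -/
def IsDoubleLine {F : Type} [Field F] (a : Fin 6 → F) : Prop :=
  ∃ (c : F) (l : Fin 3 → F), c ≠ 0 ∧ l ≠ 0 ∧ a = c • mulLin l l

/-- `f_a` is a pair of (distinct) real lines: `f_a = l1 * l2` with neither linear form a scalar
multiple of the other. -/
def IsRealPair {F : Type} [Field F] (a : Fin 6 → F) : Prop :=
  ∃ l1 l2 : Fin 3 → F, (¬ ∃ t : F, l2 = t • l1) ∧ (¬ ∃ t : F, l1 = t • l2) ∧ a = mulLin l1 l2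

/-- `f_a` is a pair of conjugate imaginary lines: singular, but not a product of two linear
forms over `F`. -/
def IsImagPair {F : Type} [Field F] (a : Fin 6 → F) : Prop :=
  disc a = 0 ∧ ¬ ∃ l1 l2 : Fin 3 → F, a = mulLin l1 l2

/-- `f_a` is a nonsingular conic. -/
def IsNonsingular {F : Type} [Field F] (a : Fin 6 → F) : Prop :=
  disc a ≠ 0

/-- The number of conics of a given type `T` in a linear system `W` (a subspace of the space of
quadratic forms, identified with `F^6`): the number of 1-dimensional subspaces `⟨a⟩` of `W`,
`a ≠ 0`, such that `f_a` has type `T`. -/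
noncomputable def numConics {F : Type} [Field F] (W : Submodule F (Fin 6 → F))
    (T : (Fin 6 → F) → Prop) : ℕ :=
  Set.ncard {P : Submodule F (Fin 6 → F) |
    ∃ a : Fin 6 → F, a ≠ 0 ∧ a ∈ W ∧ T a ∧ P = Submodule.span F {a}}

/-- The symmetric 3×3 matrix associated with a point `y` of `PG(5,q)`. -/
def M {F : Type} [Field F] (y : Fin 6 → F) : Matrix (Fin 3) (Fin 3) F :=
  !![y 0, y 1, y 2; y 1, y 3, y 4; y 2, y 4, y 5]

/-- The pairing `B(a,y) = a0*y0 + ... + a5*y5`. -/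
def Bform {F : Type} [Field F] (a y : Fin 6 → F) : F :=
  a 0 * y 0 + a 1 * y 1 + a 2 * y 2 + a 3 * y 3 + a 4 * y 4 + a 5 * y 5

/-- The squab of conics associated with a (nonzero) point `y`: the hyperplane
`{a : B(a,y) = 0}` of the space of quadratic forms. -/
def squab {F : Type} [Field F] (y : Fin 6 → F) : Submodule F (Fin 6 → F) where
  carrier := {a | Bform a y = 0}
  add_mem' := by
    intro a b ha hb
    simp only [Set.mem_setOf_eq, Bform, Pi.add_apply] at *
    linear_combination ha + hb
  zero_mem' := by simp [Bform]
  smul_mem' := by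
    intro c a ha
    simp only [Set.mem_setOf_eq, Bform, Pi.smul_apply, smul_eq_mul] at *
    linear_combination c * ha


section Aux

variable {α : Type}

@[simp] lemma v6_0 (a0 a1 a2 a3 a4 a5 : α) : ![a0,a1,a2,a3,a4,a5] 0 = a0 := rfl
@[simp] lemma v6_1 (a0 a1 a2 a3 a4 a5 : α) : ![a0,a1,a2,a3,a4,a5] 1 = a1 := rfl
@[simp] lemma v6_2 (a0 a1 a2 a3 a4 a5 : α) : ![a0,a1,a2,a3,a4,a5] 2 = a2 := rfl
@[simp] lemma v6_3 (a0 a1 a2 a3 a4 a5 : α) : ![a0,a1,a2,a3,a4,a5] 3 = a3 := rfl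
@[simp] lemma v6_4 (a0 a1 a2 a3 a4 a5 : α) : ![a0,a1,a2,a3,a4,a5] 4 = a4 := rfl
@[simp] lemma v6_5 (a0 a1 a2 a3 a4 a5 : α) : ![a0,a1,a2,a3,a4,a5] 5 = a5 := rfl
@[simp] lemma v3_0 (a0 a1 a2 : α) : ![a0,a1,a2] 0 = a0 := rfl
@[simp] lemma v3_1 (a0 a1 a2 : α) : ![a0,a1,a2] 1 = a1 := rfl
@[simp] lemma v3_2 (a0 a1 a2 : α) : ![a0,a1,a2] 2 = a2 := rfl

variable {F : Type} [Field F]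

lemma vec6_eq {a : Fin 6 → F} {b0 b1 b2 b3 b4 b5 : F} (h0 : a 0 = b0) (h1 : a 1 = b1)
    (h2 : a 2 = b2) (h3 : a 3 = b3) (h4 : a 4 = b4) (h5 : a 5 = b5) :
    a = ![b0,b1,b2,b3,b4,b5] := by
  funext i
  fin_cases i
  exacts [h0, h1, h2, h3, h4, h5]

lemma vec3_eq {a : Fin 3 → F} {b0 b1 b2 : F} (h0 : a 0 = b0) (h1 : a 1 = b1) (h2 : a 2 = b2) :
    a = ![b0,b1,b2] := by
  funext i
  fin_cases i
  exacts [h0, h1, h2]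

lemma span_smul_eq' (c : F) (hc : c ≠ 0) (x : Fin 6 → F) :
    Submodule.span F {c • x} = Submodule.span F {x} := by
  apply le_antisymm
  · rw [Submodule.span_le, Set.singleton_subset_iff]
    exact Submodule.smul_mem _ c (Submodule.mem_span_singleton_self x)
  · rw [Submodule.span_le, Set.singleton_subset_iff]
    exact Submodule.mem_span_singleton.mpr
      ⟨c⁻¹, by rw [smul_smul, inv_mul_cancel₀ hc, one_smul]⟩

lemma span_eq_imp {x y : Fin 6 → F} (h : Submodule.span F {x} = Submodule.span F {y}) :
    ∃ c : F, x = c • y := by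
  have : x ∈ Submodule.span F ({y} : Set (Fin 6 → F)) := h ▸ Submodule.mem_span_singleton_self x
  obtain ⟨c, hc⟩ := Submodule.mem_span_singleton.mp this
  exact ⟨c, hc.symm⟩

lemma disc_mulLin (b c : Fin 3 → F) : disc (mulLin b c) = 0 := by
  simp only [disc, mulLin, v6_0, v6_1, v6_2, v6_3, v6_4, v6_5]; ring

lemma disc_smul (k : F) (a : Fin 6 → F) : disc (k • a) = k^3 * disc a := by
  simp only [disc, Pi.smul_apply, smul_eq_mul]; ring

lemma smul_mulLin (c : F) (b d : Fin 3 → F) : c • mulLin b d = mulLin (c • b) d := by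
  funext i; fin_cases i <;> simp [mulLin] <;> ring

lemma not_product (u v0 : F) (hv0 : v0 ≠ 0)
    (hirr : ∀ l : F, v0 * l ^ 2 + u * v0 * l - 1 ≠ 0)
    (a : Fin 6 → F) (h1 : a 1 = u * v0 * a 0) (h3 : a 3 = -(v0 * a 0)) (h0 : a 0 ≠ 0) :
    ¬ ∃ b c : Fin 3 → F, a = mulLin b c := by
  rintro ⟨b, c, rfl⟩
  simp only [mulLin, v6_0, v6_1, v6_2, v6_3, v6_4, v6_5] at h1 h3 h0
  have hb0 : b 0 ≠ 0 := left_ne_zero_of_mul h0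
  have hc0 : c 0 ≠ 0 := right_ne_zero_of_mul h0
  have key : b 1 ^ 2 = u * v0 * (b 0 * b 1) + v0 * b 0 ^ 2 := by
    have h : c 0 * (b 1 ^ 2) = c 0 * (u * v0 * (b 0 * b 1) + v0 * b 0 ^ 2) := by
      linear_combination b 1 * h1 - b 0 * h3
    exact mul_left_cancel₀ hc0 h
  apply hirr (-(b 1) / (b 0 * v0))
  field_simp
  linear_combination key

lemma hD_ne [Fintype F] (u v0 : F) (hv0 : v0 ≠ 0)
    (hirr : ∀ l : F, v0 * l ^ 2 + u * v0 * l - 1 ≠ 0) : v0 * u ^ 2 + 4 ≠ 0 := by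
  intro h
  by_cases h2 : ringChar F = 2
  · have h2' : (2 : F) = 0 := by
      have := ringChar.Nat.cast_ringChar (R := F)
      rw [h2] at this; exact_mod_cast this
    have h4 : (4 : F) = 0 := by linear_combination 2 * h2'
    have hu : u = 0 := by
      have hvu : v0 * u ^ 2 = 0 := by linear_combination h - h4
      rcases mul_eq_zero.mp hvu with h' | h'
      · exact absurd h' hv0
      · exact pow_eq_zero_iff (n := 2) (by norm_num) |>.mp h'
    obtain ⟨s, hs⟩ := FiniteField.isSquare_of_char_two h2 v0⁻¹
    apply hirr s
    rw [hu]
    field_simp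
    rw [add_zero, mul_assoc, ← hs, mul_inv_cancel₀ hv0, sub_self]
  · have h2' : (2:F) ≠ 0 := Ring.two_ne_zero h2
    apply hirr (-(u/2))
    field_simp
    linear_combination (-1 : F) * h

lemma mem_W_iff (u v0 : F) (hv0 : v0 ≠ 0) (a : Fin 6 → F) :
    a ∈ Submodule.span F ({![v0⁻¹, u, 0, -1, 0, 0], ![0, 0, 1, 0, 0, 0],
      ![0, 0, 0, 0, 1, 0], ![0, 0, 0, 0, 0, 1]} : Set (Fin 6 → F)) ↔
    a 1 = u * v0 * a 0 ∧ a 3 = -(v0 * a 0) := by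
  constructor
  · intro h
    set M : Submodule F (Fin 6 → F) :=
      { carrier := {a | a 1 = u * v0 * a 0 ∧ a 3 = -(v0 * a 0)}
        add_mem' := by
          rintro x y ⟨hx1, hx3⟩ ⟨hy1, hy3⟩
          constructor <;> simp only [Pi.add_apply] <;>
            [linear_combination hx1 + hy1; linear_combination hx3 + hy3]
        zero_mem' := by constructor <;> simp
        smul_mem' := by
          rintro c x ⟨hx1, hx3⟩
          constructor <;> simp only [Pi.smul_apply, smul_eq_mul] <;>
            [linear_combination c * hx1; linear_combination c * hx3] } with hM
    have hle : Submodule.span F ({![v0⁻¹, u, 0, -1, 0, 0], ![0, 0, 1, 0, 0, 0],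
        ![0, 0, 0, 0, 1, 0], ![0, 0, 0, 0, 0, 1]} : Set (Fin 6 → F)) ≤ M := by
      rw [Submodule.span_le]
      intro x hx
      simp only [Set.mem_insert_iff, Set.mem_singleton_iff] at hx
      rcases hx with rfl | rfl | rfl | rfl <;> refine ⟨?_, ?_⟩ <;> simp <;> field_simp
    exact hle h
  · rintro ⟨h1, h3⟩
    have key : a = (v0 * a 0) • ![v0⁻¹, u, 0, -1, 0, 0] + a 2 • ![0, 0, 1, 0, 0, 0]
        + a 4 • ![0, 0, 0, 0, 1, 0] + a 5 • ![0, 0, 0, 0, 0, 1] := by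
      funext i
      fin_cases i <;> (try simp [h1, h3]) <;> (try field_simp) <;> (try ring)
    rw [key]
    refine Submodule.add_mem _ (Submodule.add_mem _ (Submodule.add_mem _ ?_ ?_) ?_) ?_ <;>
      exact Submodule.smul_mem _ _ (Submodule.subset_span (by simp))

end Aux

section Count

variable {F : Type} [Field F]

/-- The value of `w` making `![v0⁻¹, u, t, -1, r, w]` singular. -/
def w0 (u v0 t r : F) : F := (v0 * u ^ 2 + 4)⁻¹ * (v0 * u * t * r - r ^ 2 + v0 * t ^ 2)

lemma disc_vecS (u v0 : F) (hv0 : v0 ≠ 0) (hD : v0 * u ^ 2 + 4 ≠ 0) (t r w : F) :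
    disc ![v0⁻¹, u, t, -1, r, w] = -(v0⁻¹ * (v0 * u ^ 2 + 4)) * (w - w0 u v0 t r) := by
  simp only [disc, w0, v6_0, v6_1, v6_2, v6_3, v6_4, v6_5]
  field_simp
  ring

lemma count_double (u v0 : F) (hv0 : v0 ≠ 0)
    (hirr : ∀ l : F, v0 * l ^ 2 + u * v0 * l - 1 ≠ 0)
    (W : Submodule F (Fin 6 → F))
    (hW : ∀ a : Fin 6 → F, a ∈ W ↔ a 1 = u * v0 * a 0 ∧ a 3 = -(v0 * a 0)) :
    numConics W IsDoubleLine = 1 := by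
  have hset : {P : Submodule F (Fin 6 → F) |
      ∃ a : Fin 6 → F, a ≠ 0 ∧ a ∈ W ∧ IsDoubleLine a ∧ P = Submodule.span F {a}} =
      {Submodule.span F {(![0,0,0,0,0,1] : Fin 6 → F)}} := by
    ext P
    simp only [Set.mem_setOf_eq, Set.mem_singleton_iff]
    constructor
    · rintro ⟨a, ha, haW, ⟨c, l, hc, hl, hcl⟩, rfl⟩
      obtain ⟨h1, h3⟩ := (hW a).mp haW
      have h0 : a 0 = 0 := by
        by_contra h0
        exact not_product u v0 hv0 hirr a h1 h3 h0 ⟨c • l, l, by rw [hcl, smul_mulLin]⟩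
      have h1' : a 1 = 0 := by rw [h1, h0, mul_zero]
      have h3' : a 3 = 0 := by rw [h3, h0, mul_zero, neg_zero]
      have e0 := congrFun hcl 0
      have e2 := congrFun hcl 2
      have e3 := congrFun hcl 3
      have e4 := congrFun hcl 4
      simp only [mulLin, Pi.smul_apply, smul_eq_mul, v6_0, v6_2, v6_3, v6_4] at e0 e2 e3 e4
      have hl0 : l 0 = 0 := by
        have h' : c * (l 0 * l 0) = 0 := by rw [← e0, h0]
        exact mul_self_eq_zero.mp ((mul_eq_zero.mp h').resolve_left hc)
      have hl1 : l 1 = 0 := by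
        have h' : c * (l 1 * l 1) = 0 := by rw [← e3, h3']
        exact mul_self_eq_zero.mp ((mul_eq_zero.mp h').resolve_left hc)
      have h2' : a 2 = 0 := by rw [e2, hl0]; ring
      have h4' : a 4 = 0 := by rw [e4, hl1]; ring
      have h5 : a 5 ≠ 0 := by
        intro h5
        apply ha
        have hz : a = ![0,0,0,0,0,(0:F)] := vec6_eq h0 h1' h2' h3' h4' h5
        rw [hz]
        funext i; fin_cases i <;> rfl
      have hsm : a 5 • (![0,0,0,0,0,(1:F)]) = ![0,0,0,0,0,a 5] := by
        funext i; fin_cases i <;> simp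
      have haa : a = a 5 • (![0,0,0,0,0,(1:F)]) := by
        rw [hsm]; exact vec6_eq h0 h1' h2' h3' h4' rfl
      rw [haa]
      exact span_smul_eq' _ h5 _
    · rintro rfl
      refine ⟨![0,0,0,0,0,1], ?_, ?_, ?_, rfl⟩
      · intro h; simpa using congrFun h 5
      · exact (hW _).mpr ⟨by simp, by simp⟩
      · refine ⟨1, ![0,0,1], one_ne_zero, ?_, ?_⟩
        · intro h; simpa using congrFun h 2
        · rw [one_smul]
          funext i; fin_cases i <;> simp [mulLin]
  unfold numConics
  rw [hset, Set.ncard_singleton]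

/-- if mulLin l1 l2 = w·X2² with w ≠ 0 then l2 is a multiple of l1 -/
lemma prop_of_sq (l1 l2 : Fin 3 → F)
    (h0 : l1 0 * l2 0 = 0) (h1 : l1 0 * l2 1 + l1 1 * l2 0 = 0)
    (h2 : l1 0 * l2 2 + l1 2 * l2 0 = 0) (h3 : l1 1 * l2 1 = 0)
    (h4 : l1 1 * l2 2 + l1 2 * l2 1 = 0) (h5 : l1 2 * l2 2 ≠ 0) :
    ∃ t : F, l2 = t • l1 := by
  have hb2 : l1 2 ≠ 0 := left_ne_zero_of_mul h5
  have hc2 : l2 2 ≠ 0 := right_ne_zero_of_mul h5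
  by_cases hb0 : l1 0 = 0
  · have hc0 : l2 0 = 0 := by
      have := h2; rw [hb0] at this; simpa [hb2] using this
    by_cases hb1 : l1 1 = 0
    · have hc1 : l2 1 = 0 := by
        have := h4; rw [hb1] at this; simpa [hb2] using this
      refine ⟨l2 2 / l1 2, ?_⟩
      funext i; fin_cases i <;>
        simp [hb0, hb1, hc0, hc1] <;> field_simp
    · exfalso
      have hc1 : l2 1 = 0 := by
        rcases mul_eq_zero.mp h3 with h | h
        · exact absurd h hb1
        · exact h
      have : l1 1 * l2 2 = 0 := by rw [← h4, hc1]; ring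
      rcases mul_eq_zero.mp this with h | h
      · exact hb1 h
      · exact hc2 h
  · exfalso
    have hc0 : l2 0 = 0 := by
      rcases mul_eq_zero.mp h0 with h | h
      · exact absurd h hb0
      · exact h
    have hc1 : l2 1 = 0 := by
      have : l1 0 * l2 1 = 0 := by rw [← h1, hc0]; ring
      rcases mul_eq_zero.mp this with h | h
      · exact absurd h hb0
      · exact h
    have : l1 0 * l2 2 = 0 := by rw [← h2, hc0]; ring
    rcases mul_eq_zero.mp this with h | h
    · exact hb0 h
    · exact hc2 h

lemma count_real [Fintype F] (q : ℕ) (hq : Fintype.card F = q) (u v0 : F) (hv0 : v0 ≠ 0)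
    (hirr : ∀ l : F, v0 * l ^ 2 + u * v0 * l - 1 ≠ 0)
    (W : Submodule F (Fin 6 → F))
    (hW : ∀ a : Fin 6 → F, a ∈ W ↔ a 1 = u * v0 * a 0 ∧ a 3 = -(v0 * a 0)) :
    numConics W IsRealPair = q ^ 2 + q := by
  classical
  set φ : (F × F) ⊕ F → Submodule F (Fin 6 → F) :=
    Sum.elim (fun p => Submodule.span F {![0,0,1,0,p.1,p.2]})
      (fun w => Submodule.span F {![0,0,0,0,1,w]}) with hφ
  have hinj : Function.Injective φ := by
    rintro (⟨r, w⟩ | w) (⟨r', w'⟩ | w') h <;> simp only [hφ, Sum.elim_inl, Sum.elim_inr] at h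
    · obtain ⟨c, hc⟩ := span_eq_imp h
      have e2 := congrFun hc 2
      have e4 := congrFun hc 4
      have e5 := congrFun hc 5
      simp only [Pi.smul_apply, smul_eq_mul, v6_2, v6_4, v6_5] at e2 e4 e5
      rw [mul_one] at e2
      subst e2
      rw [one_mul] at e4 e5
      simp [← e4, ← e5]
    · exfalso
      obtain ⟨c, hc⟩ := span_eq_imp h
      have e2 := congrFun hc 2
      simp only [Pi.smul_apply, smul_eq_mul, v6_2, mul_zero] at e2
      exact one_ne_zero e2
    · exfalso
      obtain ⟨c, hc⟩ := span_eq_imp h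
      have e2 := congrFun hc 2
      have e4 := congrFun hc 4
      simp only [Pi.smul_apply, smul_eq_mul, v6_2, v6_4] at e2 e4
      rw [mul_one] at e2
      rw [← e2, zero_mul] at e4
      exact one_ne_zero e4
    · obtain ⟨c, hc⟩ := span_eq_imp h
      have e4 := congrFun hc 4
      have e5 := congrFun hc 5
      simp only [Pi.smul_apply, smul_eq_mul, v6_4, v6_5] at e4 e5
      rw [mul_one] at e4
      subst e4
      rw [one_mul] at e5
      simp [← e5]
  have hset : {P : Submodule F (Fin 6 → F) |
      ∃ a : Fin 6 → F, a ≠ 0 ∧ a ∈ W ∧ IsRealPair a ∧ P = Submodule.span F {a}} =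
      Set.range φ := by
    ext P
    simp only [Set.mem_setOf_eq, Set.mem_range]
    constructor
    · rintro ⟨a, ha, haW, ⟨l1, l2, hn1, hn2, hprod⟩, rfl⟩
      obtain ⟨h1, h3⟩ := (hW a).mp haW
      have h0 : a 0 = 0 := by
        by_contra h0
        exact not_product u v0 hv0 hirr a h1 h3 h0 ⟨l1, l2, hprod⟩
      have h1' : a 1 = 0 := by rw [h1, h0, mul_zero]
      have h3' : a 3 = 0 := by rw [h3, h0, mul_zero, neg_zero]
      have e0 := congrFun hprod 0
      have e1 := congrFun hprod 1
      have e2 := congrFun hprod 2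
      have e3 := congrFun hprod 3
      have e4 := congrFun hprod 4
      have e5 := congrFun hprod 5
      simp only [mulLin, v6_0, v6_1, v6_2, v6_3, v6_4, v6_5] at e0 e1 e2 e3 e4 e5
      have htr : ¬ (a 2 = 0 ∧ a 4 = 0) := by
        rintro ⟨h2', h4'⟩
        have h5 : a 5 ≠ 0 := by
          intro h5
          apply ha
          have hz : a = ![0,0,0,0,0,(0:F)] := vec6_eq h0 h1' h2' h3' h4' h5
          rw [hz]; funext i; fin_cases i <;> rfl
        exact hn1 (prop_of_sq l1 l2 (by rw [← e0, h0]) (by rw [← e1, h1'])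
          (by rw [← e2, h2']) (by rw [← e3, h3']) (by rw [← e4, h4'])
          (by rw [← e5]; exact h5))
      by_cases h2 : a 2 = 0
      · have h4 : a 4 ≠ 0 := fun h4 => htr ⟨h2, h4⟩
        refine ⟨Sum.inr (a 5 / a 4), ?_⟩
        simp only [hφ, Sum.elim_inr]
        have hsm : a 4 • (![0,0,0,0,1,a 5 / a 4] : Fin 6 → F) = ![0,0,0,0,a 4, a 5] := by
          funext i; fin_cases i <;> simp <;> field_simp
        have haa : a = a 4 • (![0,0,0,0,1,a 5 / a 4] : Fin 6 → F) := by
          rw [hsm]; exact vec6_eq h0 h1' h2 h3' rfl rfl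
        conv_rhs => rw [haa]
        exact (span_smul_eq' _ h4 _).symm
      · refine ⟨Sum.inl (a 4 / a 2, a 5 / a 2), ?_⟩
        simp only [hφ, Sum.elim_inl]
        have hsm : a 2 • (![0,0,1,0,a 4 / a 2, a 5 / a 2] : Fin 6 → F)
            = ![0,0,a 2,0,a 4, a 5] := by
          funext i; fin_cases i <;> simp <;> field_simp
        have haa : a = a 2 • (![0,0,1,0,a 4 / a 2, a 5 / a 2] : Fin 6 → F) := by
          rw [hsm]; exact vec6_eq h0 h1' rfl h3' rfl rfl
        conv_rhs => rw [haa]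
        exact (span_smul_eq' _ h2 _).symm
    · rintro ⟨p | w, rfl⟩
      · refine ⟨![0,0,1,0,p.1,p.2], ?_, ?_, ?_, rfl⟩
        · intro h; simpa using congrFun h 2
        · exact (hW _).mpr ⟨by simp, by simp⟩
        · refine ⟨![0,0,1], ![1,p.1,p.2], ?_, ?_, ?_⟩
          · rintro ⟨t, ht⟩
            have := congrFun ht 0
            simp at this
          · rintro ⟨t, ht⟩
            have h0' := congrFun ht 0
            have h2' := congrFun ht 2
            simp only [Pi.smul_apply, smul_eq_mul, v3_0, v3_2] at h0' h2'
            rw [mul_one] at h0'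
            rw [← h0', zero_mul] at h2'
            exact one_ne_zero h2'
          · funext i; fin_cases i <;> simp [mulLin]
      · refine ⟨![0,0,0,0,1,w], ?_, ?_, ?_, rfl⟩
        · intro h; simpa using congrFun h 4
        · exact (hW _).mpr ⟨by simp, by simp⟩
        · refine ⟨![0,0,1], ![0,1,w], ?_, ?_, ?_⟩
          · rintro ⟨t, ht⟩
            have := congrFun ht 1
            simp at this
          · rintro ⟨t, ht⟩
            have h1' := congrFun ht 1
            have h2' := congrFun ht 2
            simp only [Pi.smul_apply, smul_eq_mul, v3_1, v3_2] at h1' h2'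
            rw [mul_one] at h1'
            rw [← h1', zero_mul] at h2'
            exact one_ne_zero h2'
          · funext i; fin_cases i <;> simp [mulLin]
  unfold numConics
  rw [hset, ← Set.image_univ, Set.ncard_image_of_injective _ hinj, Set.ncard_univ]
  simp only [Nat.card_eq_fintype_card, Fintype.card_sum, Fintype.card_prod, hq]
  ring

end Count

section Count2

variable {F : Type} [Field F]

lemma normalize_vec (u v0 : F) (hv0 : v0 ≠ 0) (a : Fin 6 → F)
    (h1 : a 1 = u * v0 * a 0) (h3 : a 3 = -(v0 * a 0)) (h0 : a 0 ≠ 0) :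
    (v0 * a 0)⁻¹ • a = ![v0⁻¹, u, (v0 * a 0)⁻¹ * a 2, -1,
      (v0 * a 0)⁻¹ * a 4, (v0 * a 0)⁻¹ * a 5] := by
  have hk : v0 * a 0 ≠ 0 := mul_ne_zero hv0 h0
  refine vec6_eq ?_ ?_ rfl ?_ rfl rfl
  · show (v0 * a 0)⁻¹ * a 0 = v0⁻¹
    field_simp
  · show (v0 * a 0)⁻¹ * a 1 = u
    rw [h1]; field_simp
  · show (v0 * a 0)⁻¹ * a 3 = -1
    rw [h3]; field_simp

lemma a0_ne_zero_of_not_prod (u v0 : F) (a : Fin 6 → F)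
    (h1 : a 1 = u * v0 * a 0) (h3 : a 3 = -(v0 * a 0))
    (hnp : ¬ ∃ l1 l2 : Fin 3 → F, a = mulLin l1 l2) : a 0 ≠ 0 := by
  intro h0
  have h1' : a 1 = 0 := by rw [h1, h0, mul_zero]
  have h3' : a 3 = 0 := by rw [h3, h0, mul_zero, neg_zero]
  exact hnp ⟨![0,0,1], ![a 2, a 4, a 5], by
    funext i; fin_cases i <;> simp [mulLin, h0, h1', h3']⟩

lemma count_imag [Fintype F] (q : ℕ) (hq : Fintype.card F = q) (u v0 : F) (hv0 : v0 ≠ 0)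
    (hirr : ∀ l : F, v0 * l ^ 2 + u * v0 * l - 1 ≠ 0)
    (W : Submodule F (Fin 6 → F))
    (hW : ∀ a : Fin 6 → F, a ∈ W ↔ a 1 = u * v0 * a 0 ∧ a 3 = -(v0 * a 0)) :
    numConics W IsImagPair = q ^ 2 := by
  classical
  have hD := hD_ne u v0 hv0 hirr
  have hfac : -(v0⁻¹ * (v0 * u ^ 2 + 4)) ≠ 0 :=
    neg_ne_zero.mpr (mul_ne_zero (inv_ne_zero hv0) hD)
  set ψ : F × F → Submodule F (Fin 6 → F) :=
    fun p => Submodule.span F {![v0⁻¹, u, p.1, -1, p.2, w0 u v0 p.1 p.2]} with hψ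
  have hinj : Function.Injective ψ := by
    rintro ⟨t, r⟩ ⟨t', r'⟩ h
    simp only [hψ] at h
    obtain ⟨c, hc⟩ := span_eq_imp h
    have e3 := congrFun hc 3
    simp only [Pi.smul_apply, smul_eq_mul, v6_3] at e3
    have hc1 : c = 1 := by linear_combination e3
    subst hc1
    have e2 := congrFun hc 2
    have e4 := congrFun hc 4
    simp only [Pi.smul_apply, smul_eq_mul, v6_2, v6_4, one_mul] at e2 e4
    simp [e2, e4]
  have hset : {P : Submodule F (Fin 6 → F) |
      ∃ a : Fin 6 → F, a ≠ 0 ∧ a ∈ W ∧ IsImagPair a ∧ P = Submodule.span F {a}} =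
      Set.range ψ := by
    ext P
    simp only [Set.mem_setOf_eq, Set.mem_range]
    constructor
    · rintro ⟨a, ha, haW, ⟨hdisc, hnp⟩, rfl⟩
      obtain ⟨h1, h3⟩ := (hW a).mp haW
      have h0 : a 0 ≠ 0 := a0_ne_zero_of_not_prod u v0 a h1 h3 hnp
      have hk : v0 * a 0 ≠ 0 := mul_ne_zero hv0 h0
      have hk' : (v0 * a 0)⁻¹ ≠ 0 := inv_ne_zero hk
      have hnorm := normalize_vec u v0 hv0 a h1 h3 h0
      have hdisc' : disc ((v0 * a 0)⁻¹ • a) = 0 := by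
        rw [disc_smul, hdisc, mul_zero]
      rw [hnorm, disc_vecS u v0 hv0 hD] at hdisc'
      have hw : (v0 * a 0)⁻¹ * a 5
          = w0 u v0 ((v0 * a 0)⁻¹ * a 2) ((v0 * a 0)⁻¹ * a 4) := by
        exact sub_eq_zero.mp ((mul_eq_zero.mp hdisc').resolve_left hfac)
      refine ⟨((v0 * a 0)⁻¹ * a 2, (v0 * a 0)⁻¹ * a 4), ?_⟩
      simp only [hψ]
      rw [← hw, ← hnorm]
      exact span_smul_eq' _ hk' _
    · rintro ⟨⟨t, r⟩, rfl⟩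
      refine ⟨![v0⁻¹, u, t, -1, r, w0 u v0 t r], ?_, ?_, ⟨?_, ?_⟩, rfl⟩
      · intro h; simpa using congrFun h 3
      · refine (hW _).mpr ⟨?_, ?_⟩ <;> simp <;> field_simp
      · rw [disc_vecS u v0 hv0 hD]
        simp
      · refine not_product u v0 hv0 hirr _ ?_ ?_ ?_
        · simp; field_simp
        · simp; field_simp
        · simpa using inv_ne_zero hv0
  unfold numConics
  rw [hset, ← Set.image_univ, Set.ncard_image_of_injective _ hinj, Set.ncard_univ]
  simp only [Nat.card_eq_fintype_card, Fintype.card_prod, hq]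
  ring

lemma count_nonsingular [Fintype F] (q : ℕ) (hq : Fintype.card F = q) (u v0 : F)
    (hv0 : v0 ≠ 0)
    (hirr : ∀ l : F, v0 * l ^ 2 + u * v0 * l - 1 ≠ 0)
    (W : Submodule F (Fin 6 → F))
    (hW : ∀ a : Fin 6 → F, a ∈ W ↔ a 1 = u * v0 * a 0 ∧ a 3 = -(v0 * a 0)) :
    numConics W IsNonsingular = q ^ 3 - q ^ 2 := by
  classical
  have hD := hD_ne u v0 hv0 hirr
  have hfac : -(v0⁻¹ * (v0 * u ^ 2 + 4)) ≠ 0 :=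
    neg_ne_zero.mpr (mul_ne_zero (inv_ne_zero hv0) hD)
  set χ : F × F × {d : F // d ≠ 0} → Submodule F (Fin 6 → F) :=
    fun p => Submodule.span F {![v0⁻¹, u, p.1, -1, p.2.1, w0 u v0 p.1 p.2.1 + p.2.2.1]}
    with hχ
  have hinj : Function.Injective χ := by
    rintro ⟨t, r, d⟩ ⟨t', r', d'⟩ h
    simp only [hχ] at h
    obtain ⟨c, hc⟩ := span_eq_imp h
    have e3 := congrFun hc 3
    simp only [Pi.smul_apply, smul_eq_mul, v6_3] at e3
    have hc1 : c = 1 := by linear_combination e3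
    subst hc1
    have e2 := congrFun hc 2
    have e4 := congrFun hc 4
    have e5 := congrFun hc 5
    simp only [Pi.smul_apply, smul_eq_mul, v6_2, v6_4, v6_5, one_mul] at e2 e4 e5
    subst e2; subst e4
    have : d.1 = d'.1 := add_left_cancel e5
    simp [Subtype.ext this]
  have hset : {P : Submodule F (Fin 6 → F) |
      ∃ a : Fin 6 → F, a ≠ 0 ∧ a ∈ W ∧ IsNonsingular a ∧ P = Submodule.span F {a}} =
      Set.range χ := by
    ext P
    simp only [Set.mem_setOf_eq, Set.mem_range]
    constructor
    · rintro ⟨a, ha, haW, hdisc, rfl⟩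
      obtain ⟨h1, h3⟩ := (hW a).mp haW
      have h0 : a 0 ≠ 0 := by
        intro h0
        have h1' : a 1 = 0 := by rw [h1, h0, mul_zero]
        have h3' : a 3 = 0 := by rw [h3, h0, mul_zero, neg_zero]
        apply hdisc
        simp only [disc, h0, h1', h3']
        ring
      have hk : v0 * a 0 ≠ 0 := mul_ne_zero hv0 h0
      have hk' : (v0 * a 0)⁻¹ ≠ 0 := inv_ne_zero hk
      have hnorm := normalize_vec u v0 hv0 a h1 h3 h0
      have hdisc' : disc ((v0 * a 0)⁻¹ • a) ≠ 0 := by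
        rw [disc_smul]
        exact mul_ne_zero (pow_ne_zero _ hk') hdisc
      rw [hnorm, disc_vecS u v0 hv0 hD] at hdisc'
      have hd : (v0 * a 0)⁻¹ * a 5
          - w0 u v0 ((v0 * a 0)⁻¹ * a 2) ((v0 * a 0)⁻¹ * a 4) ≠ 0 :=
        fun h => hdisc' (by rw [h, mul_zero])
      refine ⟨((v0 * a 0)⁻¹ * a 2, (v0 * a 0)⁻¹ * a 4, ⟨_, hd⟩), ?_⟩
      simp only [hχ]
      have hw : w0 u v0 ((v0 * a 0)⁻¹ * a 2) ((v0 * a 0)⁻¹ * a 4)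
          + ((v0 * a 0)⁻¹ * a 5
            - w0 u v0 ((v0 * a 0)⁻¹ * a 2) ((v0 * a 0)⁻¹ * a 4))
          = (v0 * a 0)⁻¹ * a 5 := by ring
      rw [hw, ← hnorm]
      exact span_smul_eq' _ hk' _
    · rintro ⟨⟨t, r, d⟩, rfl⟩
      refine ⟨![v0⁻¹, u, t, -1, r, w0 u v0 t r + d.1], ?_, ?_, ?_, rfl⟩
      · intro h; simpa using congrFun h 3
      · refine (hW _).mpr ⟨?_, ?_⟩ <;> simp <;> field_simp
      · show disc _ ≠ 0
        rw [disc_vecS u v0 hv0 hD]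
        have : w0 u v0 t r + d.1 - w0 u v0 t r = d.1 := by ring
        rw [this]
        exact mul_ne_zero hfac d.2
  unfold numConics
  rw [hset, ← Set.image_univ, Set.ncard_image_of_injective _ hinj, Set.ncard_univ]
  have hcard : Nat.card (F × F × {d : F // d ≠ 0}) = q * (q * (q - 1)) := by
    have hne : Nat.card {d : F // d ≠ 0} = q - 1 := by
      rw [← Nat.card_congr (unitsEquivNeZero (G₀ := F)), Nat.card_eq_fintype_card,
        Fintype.card_units, hq]
    rw [Nat.card_prod, Nat.card_prod, hne, Nat.card_eq_fintype_card, hq]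
  rw [hcard]
  have h1 : q ^ 3 = q * (q * q) := by ring
  have h2 : q ^ 2 = q * (q * 1) := by ring
  rw [h1, h2, ← Nat.mul_sub, ← Nat.mul_sub]


end Count2

/-- conic counts of the web
`(v0⁻¹X0^2 + uX0X1 - X1^2, X0X2, X1X2, X2^2)` (line-orbit `o_{10}`), where
`v0·λ^2 + u·v0·λ - 1 ≠ 0` for all `λ ∈ F`. -/
theorem web_o10_conic_counts (F : Type) [Field F] [Fintype F] (q : ℕ)
    (hq : Fintype.card F = q) (u v0 : F) (hv0 : v0 ≠ 0)
    (hirr : ∀ l : F, v0 * l ^ 2 + u * v0 * l - 1 ≠ 0)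
    (W : Submodule F (Fin 6 → F))
    (hW : W = Submodule.span F ({![v0⁻¹, u, 0, -1, 0, 0], ![0, 0, 1, 0, 0, 0],
      ![0, 0, 0, 0, 1, 0], ![0, 0, 0, 0, 0, 1]} : Set (Fin 6 → F))) :
    numConics W IsDoubleLine = 1 ∧
    numConics W IsRealPair = q ^ 2 + q ∧
    numConics W IsImagPair = q ^ 2 ∧
    numConics W IsNonsingular = q ^ 3 - q ^ 2 := by
  subst hW
  have hmem := fun a => mem_W_iff u v0 hv0 a
  exact ⟨count_double u v0 hv0 hirr _ hmem, count_real q hq u v0 hv0 hirr _ hmem,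
    count_imag q hq u v0 hv0 hirr _ hmem, count_nonsingular q hq u v0 hv0 hirr _ hmem⟩

end Conics
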